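/- arXiv:1705.03859 — 3 statements merged into one kernel-verified Lean document; each statement's English description precedes it below -/
import Mathlib

section
/- Let l ≥ 3 be an integer, q = e^{2πi/l}, l' = l if l is odd and l/2 if l is even, c = 2 + q + q^{-1}, and [m] = (q^m - q^{-m})/(q - q^{-1}). Then ∑_{m=0}^{l'-1} (c·[m+1])^2 = -2 l' c^2 / (q - q^{-1})^2, and this quantity is nonzero. -/
open Complex Real

/-- For `q = e^{2πi/l}` with `l ≥ 3`, `l' = l` (`l` odd) or `l/2` (`l` even),
`c = 2 + q + q⁻¹` and quantum integers `[m] = (q^m - q^{-m})/(q - q⁻¹)`, one has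
`∑_{m=0}^{l'-1} (c·[m+1])² = -2l'c²/(q - q⁻¹)²`, and this quantity is nonzero. -/
theorem stmt_4 (l : ℕ) (hl : 3 ≤ l) :
    let q : ℂ := Complex.exp (2 * π * I / l)
    let l' : ℕ := if l % 2 = 1 then l else l / 2
    let c : ℂ := 2 + q + q⁻¹
    (∑ m ∈ Finset.range l',
        (c * ((q ^ ((m : ℤ) + 1) - q ^ (-((m : ℤ) + 1))) / (q - q⁻¹))) ^ 2
      = -2 * (l' : ℂ) * c ^ 2 / (q - q⁻¹) ^ 2) ∧
    -2 * (l' : ℂ) * c ^ 2 / (q - q⁻¹) ^ 2 ≠ 0 := by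
  intro q l' c
  have hq0 : q ≠ 0 := Complex.exp_ne_zero _
  have hl0 : (l : ℂ) ≠ 0 := by
    simp only [Ne, Nat.cast_eq_zero]; omega
  have hql : q ^ l = 1 := by
    show Complex.exp _ ^ l = 1
    rw [← Complex.exp_nat_mul, mul_div_cancel₀ _ hl0, Complex.exp_two_pi_mul_I]
  have hq2 : q ^ 2 ≠ 1 := by
    show Complex.exp _ ^ 2 ≠ 1
    rw [← Complex.exp_nat_mul]
    intro hcon
    rw [Complex.exp_eq_one_iff] at hcon
    obtain ⟨n, hn⟩ := hcon
    have hpi : (π : ℂ) ≠ 0 := by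
      simp [Real.pi_ne_zero]
    have h2 : ((n * l : ℤ) : ℂ) = 2 := by
      push_cast
      field_simp at hn
      have hI : (2 : ℂ) * ↑π * I ≠ 0 := by
        simp [I_ne_zero, hpi]
      have h21 : (2 : ℂ) * ↑π * I * 2 = 2 * ↑π * I * ((n : ℂ) * l) := by
        linear_combination (2 * ↑π * I) * hn
      have := mul_left_cancel₀ hI h21
      exact this.symm
    have h2' : (n * l : ℤ) = 2 := by exact_mod_cast h2
    have hd : (l : ℤ) ∣ 2 := ⟨n, by linarith [h2']⟩
    have := Int.le_of_dvd (by norm_num) hd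
    omega
  have hqq : q - q⁻¹ ≠ 0 := by
    intro h
    have h1 : q = q⁻¹ := sub_eq_zero.mp h
    apply hq2
    rw [sq]
    nth_rewrite 2 [h1]
    exact mul_inv_cancel₀ hq0
  have hl'0 : l' ≠ 0 := by
    simp only [l']; split <;> omega
  have hq2l' : (q ^ 2) ^ l' = 1 := by
    by_cases h : l % 2 = 1
    · simp only [l', if_pos h]
      rw [← pow_mul, mul_comm, pow_mul, hql, one_pow]
    · simp only [l', if_neg h]
      rw [← pow_mul, show 2 * (l / 2) = l by omega, hql]
  have S1 : ∑ m ∈ Finset.range l', (q ^ 2) ^ m = 0 := by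
    rw [geom_sum_eq hq2, hq2l']; simp
  have hq2inv : (q ^ 2)⁻¹ ≠ 1 := by simpa [inv_eq_one] using hq2
  have S2 : ∑ m ∈ Finset.range l', ((q ^ 2)⁻¹) ^ m = 0 := by
    rw [geom_sum_eq hq2inv, inv_pow, hq2l']; simp
  have hc : c ≠ 0 := by
    intro h
    have hcq : c * q = (q + 1) ^ 2 := by
      simp only [c]
      field_simp
      ring
    rw [h, zero_mul] at hcq
    have hq1 : q = -1 := by
      have := pow_eq_zero_iff (n := 2) (by norm_num) |>.mp hcq.symm
      linear_combination this
    apply hq2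
    rw [hq1]; ring
  have key : ∀ m ∈ Finset.range l',
      (c * ((q ^ ((m : ℤ) + 1) - q ^ (-((m : ℤ) + 1))) / (q - q⁻¹))) ^ 2
      = c ^ 2 / (q - q⁻¹) ^ 2 *
        (q ^ 2 * (q ^ 2) ^ m + (q ^ 2)⁻¹ * ((q ^ 2)⁻¹) ^ m - 2) := by
    intro m _
    have h1 : q ^ ((m : ℤ) + 1) = q ^ (m + 1) := by
      rw [show ((m : ℤ) + 1) = ((m + 1 : ℕ) : ℤ) by push_cast; ring, zpow_natCast]
    have h2 : q ^ (-((m : ℤ) + 1)) = (q ^ (m + 1))⁻¹ := by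
      rw [zpow_neg, h1]
    rw [h1, h2]
    have ha : q ^ (m + 1) ≠ 0 := pow_ne_zero _ hq0
    field_simp
    have hm : q ^ (m * 2) * q⁻¹ ^ (m * 2) = 1 := by
      rw [← mul_pow, mul_inv_cancel₀ hq0, one_pow]
    linear_combination (-q ^ 2) * hm
  rw [Finset.sum_congr rfl key]
  have main : ∑ m ∈ Finset.range l',
      c ^ 2 / (q - q⁻¹) ^ 2 *
        (q ^ 2 * (q ^ 2) ^ m + (q ^ 2)⁻¹ * ((q ^ 2)⁻¹) ^ m - 2)
      = -2 * (l' : ℂ) * c ^ 2 / (q - q⁻¹) ^ 2 := by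
    rw [← Finset.mul_sum]
    have : ∑ m ∈ Finset.range l',
        (q ^ 2 * (q ^ 2) ^ m + (q ^ 2)⁻¹ * ((q ^ 2)⁻¹) ^ m - 2)
        = q ^ 2 * (∑ m ∈ Finset.range l', (q ^ 2) ^ m)
          + (q ^ 2)⁻¹ * (∑ m ∈ Finset.range l', ((q ^ 2)⁻¹) ^ m)
          - 2 * l' := by
      rw [Finset.sum_sub_distrib, Finset.sum_add_distrib, ← Finset.mul_sum,
        ← Finset.mul_sum, Finset.sum_const, Finset.card_range]
      ring
    rw [this, S1, S2]
    field_simp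
    ring
  refine ⟨main, ?_⟩
  apply div_ne_zero
  · apply mul_ne_zero
    · apply mul_ne_zero (by norm_num)
      simpa using hl'0
    · exact pow_ne_zero _ hc
  · exact pow_ne_zero _ hqq
end

section
/- Let Y = (1/4)ℤ/ℤ ⊂ ℂ/ℤ and let X = {0̄, 1/2̄} ⊂ ℂ/ℤ (the classes of 0 and 1/2). Suppose ᾱ_1, ..., ᾱ_n ∈ (ℂ/ℤ) \ Y with n ≥ 2 and ᾱ_1 + ... + ᾱ_n ∉ X. Then there exist distinct indices i, j ∈ {1,...,n} with ᾱ_i + ᾱ_j ∉ X. -/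
private lemma stmt6_aux (u : ℂ)
    (h : QuotientAddGroup.mk' (AddSubgroup.zmultiples (1 : ℂ)) u =
          QuotientAddGroup.mk' (AddSubgroup.zmultiples (1 : ℂ)) 0 ∨
        QuotientAddGroup.mk' (AddSubgroup.zmultiples (1 : ℂ)) u =
          QuotientAddGroup.mk' (AddSubgroup.zmultiples (1 : ℂ)) (1 / 2)) :
    ∃ m : ℤ, 2 * u = (m : ℂ) := by
  rcases h with h | h
  · obtain ⟨z, ⟨k, hk⟩, hz⟩ := (QuotientAddGroup.mk'_eq_mk' _).mp h
    refine ⟨-2 * k, ?_⟩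
    simp only [zsmul_eq_mul, mul_one] at hk
    push_cast
    linear_combination 2 * hz + 2 * hk
  · obtain ⟨z, ⟨k, hk⟩, hz⟩ := (QuotientAddGroup.mk'_eq_mk' _).mp h
    refine ⟨-2 * k + 1, ?_⟩
    simp only [zsmul_eq_mul, mul_one] at hk
    push_cast
    linear_combination 2 * hz + 2 * hk

/-- In `ℂ/ℤ`, if `ᾱ₁,…,ᾱₙ` (`n ≥ 2`) avoid `Y = (1/4)ℤ/ℤ` and their sum avoids
`X = {0̄, (1/2)‾}`, then some pair `ᾱᵢ + ᾱⱼ` (`i ≠ j`) avoids `X`. -/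
theorem stmt_6 (n : ℕ) (hn : 2 ≤ n)
    (π : ℂ →+ ℂ ⧸ AddSubgroup.zmultiples (1 : ℂ))
    (hπ : π = QuotientAddGroup.mk' (AddSubgroup.zmultiples (1 : ℂ)))
    (a : Fin n → ℂ ⧸ AddSubgroup.zmultiples (1 : ℂ))
    (hY : ∀ i, ¬ ∃ k : ℤ, a i = π ((k : ℂ) / 4))
    (hX : ¬ (∑ i, a i = π 0 ∨ ∑ i, a i = π (1 / 2))) :
    ∃ i j, i ≠ j ∧ ¬ (a i + a j = π 0 ∨ a i + a j = π (1 / 2)) := by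
  subst hπ
  by_contra hcon
  push_neg at hcon
  rcases eq_or_lt_of_le hn with h2 | h3
  · obtain rfl := h2.symm
    exact hX (by simpa [Fin.sum_univ_two] using hcon 0 1 (by decide))
  · set π := QuotientAddGroup.mk' (AddSubgroup.zmultiples (1 : ℂ))
    have hi0 : (0 : ℕ) < n := by omega
    have hi1 : (1 : ℕ) < n := by omega
    have hi2 : (2 : ℕ) < n := by omega
    obtain ⟨x, hx⟩ := QuotientAddGroup.mk'_surjective _ (a ⟨0, hi0⟩)
    obtain ⟨y, hy⟩ := QuotientAddGroup.mk'_surjective _ (a ⟨1, hi1⟩)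
    obtain ⟨z, hz⟩ := QuotientAddGroup.mk'_surjective _ (a ⟨2, hi2⟩)
    have h01 := hcon ⟨0, hi0⟩ ⟨1, hi1⟩ (by simp)
    have h02 := hcon ⟨0, hi0⟩ ⟨2, hi2⟩ (by simp)
    have h12 := hcon ⟨1, hi1⟩ ⟨2, hi2⟩ (by simp)
    rw [← hx, ← hy, ← map_add] at h01
    rw [← hx, ← hz, ← map_add] at h02
    rw [← hy, ← hz, ← map_add] at h12
    obtain ⟨p, hp⟩ := stmt6_aux _ h01
    obtain ⟨q, hq⟩ := stmt6_aux _ h02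
    obtain ⟨r, hr⟩ := stmt6_aux _ h12
    refine hY ⟨0, hi0⟩ ⟨p + q - r, ?_⟩
    have hx4 : x = ((p + q - r : ℤ) : ℂ) / 4 := by
      push_cast
      linear_combination (hp + hq - hr) / 4
    rw [← hx, hx4]
end

section
/- In the quantum superalgebra U_q(sl(2|1)) at q = e^{2πi/l}, on the simple highest weight module V(n, α̃) with basis {w_{ρ,σ,p} : ρ,σ ∈ {0,1}, 0 ≤ p ≤ n} and action F_1·w_{ρ,σ,p} = q^{σ-ρ} w_{ρ,σ,p+1} - ρ(1-σ)q^{-ρ} w_{ρ-1,σ+1,p} (with w out of range = 0), the operator F_1^{l'} acts as zero, where l' = l for l odd and l/2 for l even. -/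
open Complex Real

abbrev Ix (n : ℕ) := Fin 2 × Fin 2 × Fin (n + 1)

noncomputable def Am (n : ℕ) (q : ℂ) : Matrix (Ix n) (Ix n) ℂ :=
  fun b b' => if b.1 = b'.1 ∧ b.2.1 = b'.2.1 ∧ (b.2.2 : ℕ) = (b'.2.2 : ℕ) + 1 then
      q ^ (((b'.2.1 : ℕ) : ℤ) - ((b'.1 : ℕ) : ℤ)) else 0

noncomputable def Bm (n : ℕ) (q : ℂ) : Matrix (Ix n) (Ix n) ℂ :=
  fun b b' => if (b'.1 : ℕ) = 1 ∧ (b'.2.1 : ℕ) = 0 ∧ (b.1 : ℕ) = 0 ∧ (b.2.1 : ℕ) = 1 ∧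
      b.2.2 = b'.2.2 then -q ^ (-1 : ℤ) else 0

lemma hBB (n : ℕ) (q : ℂ) : Bm n q * Bm n q = 0 := by
  ext b b'
  rw [Matrix.mul_apply]
  apply Finset.sum_eq_zero
  intro c _
  obtain ⟨c1, c2, c3⟩ := c
  fin_cases c1 <;> fin_cases c2 <;> simp [Bm]

lemma hAB (n : ℕ) (q : ℂ) (hq : q ≠ 0) :
    Am n q * Bm n q = (q ^ 2) • (Bm n q * Am n q) := by
  ext b b'
  obtain ⟨b1, b2, b3⟩ := b
  obtain ⟨b1', b2', b3'⟩ := b'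
  rw [Matrix.mul_apply, Matrix.smul_apply, Matrix.mul_apply, Finset.smul_sum]
  fin_cases b1 <;> fin_cases b2 <;> fin_cases b1' <;> fin_cases b2' <;>
    simp [Am, Bm, Fintype.sum_prod_type, Fin.sum_univ_two, Finset.mul_sum] <;>
    field_simp
  rw [Finset.sum_eq_single b3 (fun x _ hx => by simp [Ne.symm hx]) (by simp)]
  by_cases h : (b3:ℕ) = (b3':ℕ) + 1 <;> simp [h] <;> field_simp <;> ring

lemma hApow (n : ℕ) (q : ℂ) : ∀ (k : ℕ) (b b' : Ix n), (b.2.2 : ℕ) < k →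
    ((Am n q) ^ k) b b' = 0 := by
  intro k
  induction k with
  | zero => intro b b' h; omega
  | succ k ih =>
    intro b b' h
    rw [pow_succ', Matrix.mul_apply]
    apply Finset.sum_eq_zero
    intro c _
    by_cases hc : b.1 = c.1 ∧ b.2.1 = c.2.1 ∧ (b.2.2 : ℕ) = (c.2.2 : ℕ) + 1
    · rw [ih c b' (by omega), mul_zero]
    · show Am n q b c * _ = 0
      rw [Am, if_neg hc, zero_mul]

lemma hAn (n : ℕ) (q : ℂ) : (Am n q) ^ (n + 1) = 0 := by
  ext b b'
  exact hApow n q (n + 1) b b' (by omega)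

lemma hAkB (n : ℕ) (q : ℂ) (hq : q ≠ 0) (k : ℕ) :
    (Am n q) ^ k * Bm n q = ((q ^ 2) ^ k) • (Bm n q * (Am n q) ^ k) := by
  induction k with
  | zero => simp
  | succ k ih =>
    rw [pow_succ', mul_assoc, ih, Matrix.mul_smul, ← mul_assoc, hAB n q hq,
      Matrix.smul_mul, mul_assoc, smul_smul, pow_succ]
    ring_nf

lemma hMain (n : ℕ) (q : ℂ) (hq : q ≠ 0) (k : ℕ) :
    (Am n q + Bm n q) ^ (k + 1) =
      (Am n q) ^ (k + 1) +
        (∑ j ∈ Finset.range (k + 1), (q ^ 2) ^ j) • (Bm n q * (Am n q) ^ k) := by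
  induction k with
  | zero => simp
  | succ k ih =>
    rw [pow_succ, ih, add_mul, Matrix.smul_mul, mul_add, ← pow_succ, mul_add]
    have h1 : (Am n q) ^ (k + 1) * Bm n q = ((q ^ 2) ^ (k + 1)) • (Bm n q * (Am n q) ^ (k + 1)) :=
      hAkB n q hq (k + 1)
    have h2 : Bm n q * (Am n q) ^ k * Bm n q = 0 := by
      rw [mul_assoc, hAkB n q hq k, Matrix.mul_smul, ← mul_assoc, hBB]
      simp
    rw [smul_add, h1, h2, smul_zero, add_zero, mul_assoc, ← pow_succ]
    conv_rhs => rw [Finset.sum_range_succ, add_smul]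
    abel

/-- On the module `V(n, α̃)` of `U_q(sl(2|1))` at `q = e^{2πi/l}`, with basis
`w_{ρ,σ,p}` (`ρ,σ ∈ {0,1}`, `0 ≤ p ≤ n`) and
`F₁·w_{ρ,σ,p} = q^{σ-ρ} w_{ρ,σ,p+1} - ρ(1-σ)q^{-ρ} w_{ρ-1,σ+1,p}` (out-of-range vectors
are zero), the operator `F₁^{l'}` acts as zero, where `l' = l` (`l` odd), `l/2` (`l` even).
Here `F₁` is encoded by its matrix `M` in the basis `w`, with column convention
`F₁ w_{b'} = ∑_b M b b' · w_b`. -/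
theorem stmt_17 (l : ℕ) (hl : 3 ≤ l) (n : ℕ)
    (hn : n + 1 ≤ (if l % 2 = 1 then l else l / 2)) :
    let q : ℂ := Complex.exp (2 * π * I / l)
    let l' : ℕ := if l % 2 = 1 then l else l / 2
    let M : Matrix (Fin 2 × Fin 2 × Fin (n + 1)) (Fin 2 × Fin 2 × Fin (n + 1)) ℂ :=
      fun b b' =>
        (if b.1 = b'.1 ∧ b.2.1 = b'.2.1 ∧ (b.2.2 : ℕ) = (b'.2.2 : ℕ) + 1 then
            q ^ (((b'.2.1 : ℕ) : ℤ) - ((b'.1 : ℕ) : ℤ))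
          else 0) +
        (if (b'.1 : ℕ) = 1 ∧ (b'.2.1 : ℕ) = 0 ∧ (b.1 : ℕ) = 0 ∧ (b.2.1 : ℕ) = 1 ∧
            b.2.2 = b'.2.2 then
            -q ^ (-1 : ℤ)
          else 0)
    M ^ l' = 0 := by
  intro q l' M
  have hl0 : (l : ℂ) ≠ 0 := Nat.cast_ne_zero.mpr (by omega)
  have hq0 : q ≠ 0 := Complex.exp_ne_zero _
  have hM : M = Am n q + Bm n q := rfl
  -- 2 * l' = m * l  with m ∈ {1, 2}
  obtain ⟨m, hm0, hm⟩ : ∃ m : ℕ, m ≠ 0 ∧ 2 * l' = m * l := by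
    show ∃ m : ℕ, m ≠ 0 ∧ 2 * (if l % 2 = 1 then l else l / 2) = m * l
    rcases Nat.even_or_odd l with he | ho
    · refine ⟨1, one_ne_zero, ?_⟩
      have : l % 2 = 0 := Nat.even_iff.mp he
      simp [this]
      omega
    · have : l % 2 = 1 := Nat.odd_iff.mp ho
      exact ⟨2, two_ne_zero, by simp [this]⟩
  have hq2pow : (q ^ 2) ^ l' = 1 := by
    rw [← pow_mul, show q = Complex.exp (2 * π * I / l) from rfl, ← Complex.exp_nat_mul]
    have : ((2 * l' : ℕ) : ℂ) * (2 * π * I / l) = m * (2 * π * I) := by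
      rw [hm]
      push_cast
      field_simp
    rw [this, Complex.exp_nat_mul, Complex.exp_two_pi_mul_I, one_pow]
  have hq2ne : q ^ 2 ≠ 1 := by
    intro h
    rw [show q = Complex.exp (2 * π * I / l) from rfl, ← Complex.exp_nat_mul,
      Complex.exp_eq_one_iff] at h
    obtain ⟨k, hk⟩ := h
    have hpi : (2 * π * I : ℂ) ≠ 0 := by
      simp [Real.pi_ne_zero, Complex.I_ne_zero, Complex.ext_iff]
    have h2 : (2 : ℂ) = k * l := by
      have := hk
      field_simp at this
      have h2pi : ((2:ℂ) - k * l) * (2 * π * I) = 0 := by push_cast at this ⊢; ring_nf at this ⊢; linear_combination (2 * ↑π * I) * this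
      rcases mul_eq_zero.mp h2pi with h | h
      · exact sub_eq_zero.mp h
      · exact absurd h hpi
    have : (2 : ℤ) = k * l := by exact_mod_cast h2
    have hdvd : (l : ℤ) ∣ 2 := ⟨k, by linear_combination this⟩
    have := Int.le_of_dvd (by norm_num) hdvd
    omega
  have hgeom : ∑ j ∈ Finset.range l', (q ^ 2) ^ j = 0 := by
    rw [geom_sum_eq hq2ne, hq2pow, sub_self, zero_div]
  have hl' : n + 1 ≤ l' := hn
  have hApow0 : (Am n q) ^ l' = 0 := by
    have : l' = (n + 1) + (l' - (n + 1)) := by omega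
    rw [this, pow_add, hAn, zero_mul]
  have hl'succ : l' = (l' - 1) + 1 := by omega
  rw [hM, hl'succ, hMain n q hq0 (l' - 1), ← hl'succ, hApow0, hgeom, zero_smul, add_zero]
end
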